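/- Signature Gröbner basis criterion (signature Buchberger criterion): let T be a module monomial of R^m and B ⊂ R^m a finite set. If every regular S-pair spair(α,β) with α, β ∈ B and s(spair(α,β)) < T s-reduces to zero w.r.t. B, and every basis vector e_i with e_i < T s-reduces to zero w.r.t. B, then B is a signature Gröbner basis up to signature T. -/

import Mathlib

open MvPolynomial
open scoped MonomialOrder

namespace GB

variable {σ K : Type*} [Field K]

/-- The leading monomial (exponent vector) of `p` with respect to the monomial order `m`. -/
noncomputable def lm (m : MonomialOrder σ) (p : MvPolynomial σ K) : σ →₀ ℕ :=
  m.toSyn.symm (p.support.sup m.toSyn)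

/-- The leading coefficient of `p` with respect to `m`. -/
noncomputable def lc (m : MonomialOrder σ) (p : MvPolynomial σ K) : K :=
  p.coeff (lm m p)

/-- The leading term of `p` with respect to `m`. -/
noncomputable def lt (m : MonomialOrder σ) (p : MvPolynomial σ K) : MvPolynomial σ K :=
  monomial (lm m p) (lc m p)

/-- The (monic) least common multiple of two monomials, as pointwise sup of exponents. -/
noncomputable def mlcm (a b : σ →₀ ℕ) : σ →₀ ℕ := a ⊔ b

/-- The S-polynomial `S(f,g) = (λ/lt f)·f − (λ/lt g)·g` where `λ = lcm(lm f, lm g)`. -/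
noncomputable def sPoly (m : MonomialOrder σ) (f g : MvPolynomial σ K) : MvPolynomial σ K :=
  monomial (mlcm (lm m f) (lm m g) - lm m f) (lc m f)⁻¹ * f
    - monomial (mlcm (lm m f) (lm m g) - lm m g) (lc m g)⁻¹ * g

variable {n : ℕ}

/-- The map `π : R^n → R`, `α ↦ Σ αᵢ fᵢ`, determined by the input polynomials `F`. -/
noncomputable def piMap (F α : Fin n → MvPolynomial σ K) : MvPolynomial σ K :=
  ∑ i, α i * F i

/-- The `i`-th standard basis vector of `R^n`. -/
noncomputable def eV (i : Fin n) : Fin n → MvPolynomial σ K :=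
  fun k => if k = i then 1 else 0

/-- Scalar multiplication of a module element by the monomial with exponent `a` and
coefficient `c`. -/
noncomputable def mulV (a : σ →₀ ℕ) (c : K) (α : Fin n → MvPolynomial σ K) :
    Fin n → MvPolynomial σ K :=
  fun i => monomial a c * α i

/-- The S-pair `spair(α,β) = (λ/lt(πα))·α − (λ/lt(πβ))·β`, `λ = lcm(lm(πα), lm(πβ))`. -/
noncomputable def spair (m : MonomialOrder σ) (F α β : Fin n → MvPolynomial σ K) :
    Fin n → MvPolynomial σ K :=
  fun i =>
    monomial (mlcm (lm m (piMap F α)) (lm m (piMap F β)) - lm m (piMap F α))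
        (lc m (piMap F α))⁻¹ * α i
      - monomial (mlcm (lm m (piMap F α)) (lm m (piMap F β)) - lm m (piMap F β))
        (lc m (piMap F β))⁻¹ * β i

/-- A module monomial order on the module monomials `a·eᵢ` of `R^n` (encoded as pairs `(a,i)`),
compatible with the monomial order `m`: a well-founded linear order, compatible with monomial
multiplication, such that `a ≼[m] b` iff `a·eᵢ ≤ b·eᵢ` for all `i`. -/
structure ModOrder (σ : Type*) (n : ℕ) (m : MonomialOrder σ) where
  /-- the synonym type carrying the order -/
  syn : Type*
  /-- `syn` is linearly ordered -/
  lin : LinearOrder syn := by infer_instance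
  /-- identification of module monomials with `syn` -/
  toSyn : ((σ →₀ ℕ) × Fin n) ≃ syn
  /-- the order is a well-order -/
  wf : WellFounded fun x y : syn => x < y
  /-- compatibility with monomial multiplication -/
  smul_compat : ∀ (c : σ →₀ ℕ) (S T : (σ →₀ ℕ) × Fin n),
    toSyn S ≤ toSyn T → toSyn (c + S.1, S.2) ≤ toSyn (c + T.1, T.2)
  /-- compatibility with the monomial order `m` -/
  compat : ∀ (a b : σ →₀ ℕ) (i : Fin n), toSyn (a, i) ≤ toSyn (b, i) ↔ a ≼[m] b

attribute [instance] ModOrder.lin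

/-- The set of module terms (module monomials with nonzero coefficient) of `α ∈ R^n`. -/
noncomputable def msupport (α : Fin n → MvPolynomial σ K) : Finset ((σ →₀ ℕ) × Fin n) := by
  classical
  exact Finset.univ.biUnion fun i => (α i).support.image fun a => (a, i)

/-- The signature of `α`: its maximal module term w.r.t. `mo` (`⊥` for `α = 0`). -/
noncomputable def sig {m : MonomialOrder σ} (mo : ModOrder σ n m)
    (α : Fin n → MvPolynomial σ K) : WithBot mo.syn :=
  ((msupport α).image mo.toSyn).max

/-- `T` is the signature of `α` (as a module monomial). -/
def IsSigMon {m : MonomialOrder σ} (mo : ModOrder σ n m)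
    (α : Fin n → MvPolynomial σ K) (T : (σ →₀ ℕ) × Fin n) : Prop :=
  sig mo α = (mo.toSyn T : WithBot mo.syn)

/-- One 𝔰-reduction step of `α` by some `β ∈ B`: a monomial multiple `b·β` whose polynomial
lead term equals (and cancels) a term of `π α` and with `s(b·β) ≤ s(α)` is subtracted. -/
def SRedStep (m : MonomialOrder σ) (mo : ModOrder σ n m) (F : Fin n → MvPolynomial σ K)
    (B : Set (Fin n → MvPolynomial σ K)) (α α' : Fin n → MvPolynomial σ K) : Prop :=
  ∃ β ∈ B, ∃ (a : σ →₀ ℕ) (c : K), c ≠ 0 ∧ piMap F β ≠ 0 ∧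
    (a + lm m (piMap F β)) ∈ (piMap F α).support ∧
    c * lc m (piMap F β) = (piMap F α).coeff (a + lm m (piMap F β)) ∧
    sig mo (mulV a c β) ≤ sig mo α ∧
    α' = fun i => α i - monomial a c * β i

/-- A regular 𝔰-reduction step: as `SRedStep`, but with `s(b·β) < s(α)`. -/
def RegSRedStep (m : MonomialOrder σ) (mo : ModOrder σ n m) (F : Fin n → MvPolynomial σ K)
    (B : Set (Fin n → MvPolynomial σ K)) (α α' : Fin n → MvPolynomial σ K) : Prop :=
  ∃ β ∈ B, ∃ (a : σ →₀ ℕ) (c : K), c ≠ 0 ∧ piMap F β ≠ 0 ∧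
    (a + lm m (piMap F β)) ∈ (piMap F α).support ∧
    c * lc m (piMap F β) = (piMap F α).coeff (a + lm m (piMap F β)) ∧
    sig mo (mulV a c β) < sig mo α ∧
    α' = fun i => α i - monomial a c * β i

/-- `α` 𝔰-reduces to zero w.r.t. `B`: a chain of 𝔰-reduction steps reaches a syzygy. -/
def SRedToZero (m : MonomialOrder σ) (mo : ModOrder σ n m) (F : Fin n → MvPolynomial σ K)
    (B : Set (Fin n → MvPolynomial σ K)) (α : Fin n → MvPolynomial σ K) : Prop :=
  ∃ γ, Relation.ReflTransGen (SRedStep m mo F B) α γ ∧ piMap F γ = 0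

/-- `α` regular 𝔰-reduces to zero w.r.t. `B`: a chain of regular 𝔰-reduction steps reaches
a syzygy. -/
def RegSRedToZero (m : MonomialOrder σ) (mo : ModOrder σ n m) (F : Fin n → MvPolynomial σ K)
    (B : Set (Fin n → MvPolynomial σ K)) (α : Fin n → MvPolynomial σ K) : Prop :=
  ∃ γ, Relation.ReflTransGen (RegSRedStep m mo F B) α γ ∧ piMap F γ = 0

/-- `B` is a signature Gröbner basis up to signature `T`: every `γ` with `s(γ) < T`
𝔰-reduces to zero w.r.t. `B`. -/
def SigGBUpTo (m : MonomialOrder σ) (mo : ModOrder σ n m) (F : Fin n → MvPolynomial σ K)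
    (B : Set (Fin n → MvPolynomial σ K)) (T : WithBot mo.syn) : Prop :=
  ∀ γ : Fin n → MvPolynomial σ K, sig mo γ < T → SRedToZero m mo F B γ

section Lemmas

variable {m : MonomialOrder σ} {mo : ModOrder σ n m}
  {F B : Fin n → MvPolynomial σ K}

/-! ### Basic facts about `lm`, `lc` -/

lemma toSyn_lm (m : MonomialOrder σ) (p : MvPolynomial σ K) :
    m.toSyn (lm m p) = p.support.sup m.toSyn := by
  simp [lm]

lemma le_toSyn_lm {p : MvPolynomial σ K} {q : σ →₀ ℕ} (h : q ∈ p.support) :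
    m.toSyn q ≤ m.toSyn (lm m p) := by
  rw [toSyn_lm]; exact Finset.le_sup h

lemma lm_mem_support {p : MvPolynomial σ K} (h : p ≠ 0) : lm m p ∈ p.support := by
  obtain ⟨b, hb, he⟩ := Finset.exists_mem_eq_sup p.support
    (MvPolynomial.support_nonempty.mpr h) m.toSyn
  have : lm m p = b := by rw [lm, he]; exact m.toSyn.symm_apply_apply b
  rwa [this]

lemma lc_ne_zero {p : MvPolynomial σ K} (h : p ≠ 0) : lc m p ≠ 0 :=
  MvPolynomial.mem_support_iff.mp (lm_mem_support h)

lemma lm_unique {p : MvPolynomial σ K} {M : σ →₀ ℕ} (hM : p.coeff M ≠ 0)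
    (h : ∀ q ∈ p.support, m.toSyn q ≤ m.toSyn M) : lm m p = M := by
  apply m.toSyn.injective
  rw [toSyn_lm]
  exact le_antisymm (Finset.sup_le h) (Finset.le_sup (MvPolynomial.mem_support_iff.mpr hM))

lemma support_monomial_mul_le {a q : σ →₀ ℕ} {c : K} {p : MvPolynomial σ K}
    (h : q ∈ (MvPolynomial.monomial a c * p).support) :
    m.toSyn q ≤ m.toSyn (a + lm m p) := by
  rw [MvPolynomial.mem_support_iff, MvPolynomial.coeff_monomial_mul'] at h
  split_ifs at h with hle
  · have h2 : q - a ∈ p.support := by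
      rw [MvPolynomial.mem_support_iff]; intro h0; rw [h0, mul_zero] at h; exact h rfl
    have := le_toSyn_lm (m := m) h2
    calc m.toSyn q = m.toSyn (a + (q - a)) := by rw [add_tsub_cancel_of_le hle]
    _ ≤ m.toSyn (a + lm m p) := by rw [map_add, map_add]; exact add_le_add le_rfl this
  · exact absurd rfl h

lemma coeff_monomial_mul_lm {a : σ →₀ ℕ} {c : K} (p : MvPolynomial σ K) :
    (MvPolynomial.monomial a c * p).coeff (a + lm m p) = c * lc m p := by
  rw [MvPolynomial.coeff_monomial_mul]; rfl

/-! ### `piMap` linearity -/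

lemma piMap_sub (α β : Fin n → MvPolynomial σ K) :
    piMap F (fun i => α i - β i) = piMap F α - piMap F β := by
  simp [piMap, sub_mul, Finset.sum_sub_distrib]

lemma piMap_mulV (a : σ →₀ ℕ) (c : K) (β : Fin n → MvPolynomial σ K) :
    piMap F (mulV a c β) = MvPolynomial.monomial a c * piMap F β := by
  simp [piMap, mulV, Finset.mul_sum, mul_assoc]

lemma piMap_zero : piMap F (fun _ => (0 : MvPolynomial σ K)) = 0 := by
  simp [piMap]

lemma piMap_eV (i : Fin n) : piMap F (eV i) = F i := by
  simp [piMap, eV, ite_mul]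

lemma mulV_mulV (b a : σ →₀ ℕ) (d c : K) (β : Fin n → MvPolynomial σ K) :
    mulV b d (mulV a c β) = mulV (b + a) (d * c) β := by
  funext i
  simp [mulV, ← mul_assoc, MvPolynomial.monomial_mul]

end Lemmas
section Lemmas2

variable {m : MonomialOrder σ} {mo : ModOrder σ n m}
  {F B : Fin n → MvPolynomial σ K}

/-- shift of a module monomial by a monomial -/
noncomputable def shf (a : σ →₀ ℕ) (P : (σ →₀ ℕ) × Fin n) : (σ →₀ ℕ) × Fin n := (a + P.1, P.2)

lemma mem_msupport {α : Fin n → MvPolynomial σ K} {P : (σ →₀ ℕ) × Fin n} :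
    P ∈ msupport α ↔ (α P.2).coeff P.1 ≠ 0 := by
  classical
  simp only [msupport, Finset.mem_biUnion, Finset.mem_univ, true_and, Finset.mem_image,
    MvPolynomial.mem_support_iff]
  constructor
  · rintro ⟨i, a, ha, rfl⟩; exact ha
  · intro h; exact ⟨P.2, P.1, h, rfl⟩

lemma le_sig {α : Fin n → MvPolynomial σ K} {P : (σ →₀ ℕ) × Fin n} (h : P ∈ msupport α) :
    (mo.toSyn P : WithBot mo.syn) ≤ sig mo α :=
  Finset.le_max (Finset.mem_image_of_mem _ h)

lemma sig_le_iff {α : Fin n → MvPolynomial σ K} {x : WithBot mo.syn} :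
    sig mo α ≤ x ↔ ∀ P ∈ msupport α, (mo.toSyn P : WithBot mo.syn) ≤ x := by
  rw [sig, Finset.max_le_iff]
  constructor
  · intro h P hP; exact h _ (Finset.mem_image_of_mem _ hP)
  · intro h b hb
    obtain ⟨P, hP, rfl⟩ := Finset.mem_image.mp hb
    exact h P hP

lemma msupport_eq_empty {α : Fin n → MvPolynomial σ K} (h : msupport α = ∅) :
    α = fun _ => 0 := by
  funext i
  rw [MvPolynomial.eq_zero_iff]
  intro d
  by_contra hd
  have : (d, i) ∈ msupport α := mem_msupport.mpr hd
  simp [h] at this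

lemma exists_sig {α : Fin n → MvPolynomial σ K} (h : ¬ msupport α = ∅) :
    ∃ P ∈ msupport α, sig mo α = (mo.toSyn P : WithBot mo.syn) ∧
      ∀ Q ∈ msupport α, mo.toSyn Q ≤ mo.toSyn P := by
  have hne : ((msupport α).image mo.toSyn).Nonempty :=
    (Finset.image_nonempty).mpr (Finset.nonempty_iff_ne_empty.mpr h)
  obtain ⟨b, hb⟩ := Finset.max_of_nonempty hne
  obtain ⟨P, hP, rfl⟩ := Finset.mem_image.mp (Finset.mem_of_max hb)
  refine ⟨P, hP, hb, fun Q hQ => ?_⟩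
  have := Finset.le_max (Finset.mem_image_of_mem mo.toSyn hQ)
  rw [hb, WithBot.coe_le_coe] at this
  exact this

lemma sig_lt_coe_of {α : Fin n → MvPolynomial σ K} {P : (σ →₀ ℕ) × Fin n}
    (h : ∀ Q ∈ msupport α, mo.toSyn Q < mo.toSyn P) :
    sig mo α < (mo.toSyn P : WithBot mo.syn) := by
  by_cases he : msupport α = ∅
  · rw [sig, he]
    simp
  · obtain ⟨Q, hQ, hsig, _⟩ := exists_sig (mo := mo) he
    rw [hsig, WithBot.coe_lt_coe]
    exact h Q hQ

lemma msupport_sub {α β : Fin n → MvPolynomial σ K} {P : (σ →₀ ℕ) × Fin n}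
    (h : P ∈ msupport (fun i => α i - β i)) : P ∈ msupport α ∨ P ∈ msupport β := by
  rw [mem_msupport] at h ⊢
  rw [mem_msupport (α := β)]
  by_contra hc
  push_neg at hc
  simp only [MvPolynomial.coeff_sub, hc.1, hc.2, sub_zero] at h
  exact h rfl

lemma sig_sub_le {α β : Fin n → MvPolynomial σ K} :
    sig mo (fun i => α i - β i) ≤ max (sig mo α) (sig mo β) := by
  rw [sig_le_iff]
  intro P hP
  rcases msupport_sub hP with h | h
  · exact le_max_of_le_left (le_sig h)
  · exact le_max_of_le_right (le_sig h)

lemma mem_msupport_mulV {a : σ →₀ ℕ} {c : K} (hc : c ≠ 0) {α : Fin n → MvPolynomial σ K}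
    {P : (σ →₀ ℕ) × Fin n} :
    P ∈ msupport (mulV a c α) ↔ ∃ Q ∈ msupport α, P = shf a Q := by
  rw [mem_msupport]
  show (MvPolynomial.monomial a c * α P.2).coeff P.1 ≠ 0 ↔ _
  rw [MvPolynomial.coeff_monomial_mul']
  constructor
  · intro h
    split_ifs at h with hle
    · refine ⟨(P.1 - a, P.2), mem_msupport.mpr ?_, ?_⟩
      · intro h0; rw [h0, mul_zero] at h; exact h rfl
      · show P = (a + (P.1 - a), P.2)
        rw [add_tsub_cancel_of_le hle]
    · exact absurd rfl h
  · rintro ⟨Q, hQ, rfl⟩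
    rw [mem_msupport] at hQ
    have hle : a ≤ (shf a Q).1 := le_add_self.trans_eq (by rw [add_comm]; rfl)
    rw [if_pos hle]
    show c * (α Q.2).coeff (a + Q.1 - a) ≠ 0
    rw [add_tsub_cancel_left]
    exact mul_ne_zero hc hQ

lemma le_toSyn_shf (mo : ModOrder σ n m) (b : σ →₀ ℕ) (P : (σ →₀ ℕ) × Fin n) :
    mo.toSyn P ≤ mo.toSyn (shf b P) := by
  have : mo.toSyn (P.1, P.2) ≤ mo.toSyn (b + P.1, P.2) := by
    rw [mo.compat]
    have : m.toSyn P.1 ≤ m.toSyn P.1 + m.toSyn b := le_add_of_nonneg_right bot_le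
    rw [← map_add, add_comm] at this
    exact this
  exact this

lemma toSyn_shf_le {b : σ →₀ ℕ} {P Q : (σ →₀ ℕ) × Fin n} (h : mo.toSyn P ≤ mo.toSyn Q) :
    mo.toSyn (shf b P) ≤ mo.toSyn (shf b Q) := mo.smul_compat b P Q h

lemma sig_mulV_le {a : σ →₀ ℕ} {c : K} {α : Fin n → MvPolynomial σ K}
    {P : (σ →₀ ℕ) × Fin n} (hα : sig mo α ≤ (mo.toSyn P : WithBot mo.syn)) :
    sig mo (mulV a c α) ≤ (mo.toSyn (shf a P) : WithBot mo.syn) := by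
  rw [sig_le_iff]
  intro Q' hQ'
  by_cases hc : c = 0
  · exfalso
    rw [mem_msupport] at hQ'
    apply hQ'
    simp [mulV, hc]
  · obtain ⟨Q, hQ, rfl⟩ := (mem_msupport_mulV hc).mp hQ'
    have h1 : (mo.toSyn Q : WithBot mo.syn) ≤ (mo.toSyn P : WithBot mo.syn) :=
      (le_sig hQ).trans hα
    rw [WithBot.coe_le_coe] at h1
    exact WithBot.coe_le_coe.mpr (toSyn_shf_le h1)

lemma sig_mulV_eq {a : σ →₀ ℕ} {c : K} (hc : c ≠ 0) {α : Fin n → MvPolynomial σ K}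
    {P : (σ →₀ ℕ) × Fin n} (hP : P ∈ msupport α)
    (hmax : ∀ Q ∈ msupport α, mo.toSyn Q ≤ mo.toSyn P) :
    sig mo (mulV a c α) = (mo.toSyn (shf a P) : WithBot mo.syn) := by
  refine le_antisymm (sig_mulV_le (sig_le_iff.mpr fun Q hQ => WithBot.coe_le_coe.mpr (hmax Q hQ))) ?_
  exact le_sig ((mem_msupport_mulV hc).mpr ⟨P, hP, rfl⟩)

end Lemmas2
section Lemmas3

variable {m : MonomialOrder σ} {mo : ModOrder σ n m}
  {F : Fin n → MvPolynomial σ K} {B : Set (Fin n → MvPolynomial σ K)}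

/-- entries of a representation: a monomial, a coefficient, an element of `B` -/
abbrev Ent (σ K : Type*) [Field K] (n : ℕ) : Type _ :=
  (σ →₀ ℕ) × K × (Fin n → MvPolynomial σ K)

/-- the polynomial value of an entry -/
noncomputable def vE (F : Fin n → MvPolynomial σ K) (e : Ent σ K n) : MvPolynomial σ K :=
  MvPolynomial.monomial e.1 e.2.1 * piMap F e.2.2

/-- the product monomial of an entry, in the order synonym -/
noncomputable def fE (m : MonomialOrder σ) (F : Fin n → MvPolynomial σ K) (e : Ent σ K n) :
    m.syn := m.toSyn (e.1 + lm m (piMap F e.2.2))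

/-- the signature of an entry -/
noncomputable def sgE (mo : ModOrder σ n m) (e : Ent σ K n) : WithBot mo.syn :=
  sig mo (mulV e.1 e.2.1 e.2.2)

/-- the sum of the values of a representation -/
noncomputable def psum (F : Fin n → MvPolynomial σ K) (L : Multiset (Ent σ K n)) :
    MvPolynomial σ K := (L.map (vE F)).sum

/-- a valid representation with signatures bounded by `S` -/
def Ok (mo : ModOrder σ n m) (F : Fin n → MvPolynomial σ K)
    (B : Set (Fin n → MvPolynomial σ K)) (S : WithBot mo.syn) (L : Multiset (Ent σ K n)) :
    Prop :=
  ∀ e ∈ L, e.2.2 ∈ B ∧ piMap F e.2.2 ≠ 0 ∧ e.2.1 ≠ 0 ∧ sgE mo e ≤ S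

lemma Ok.mono {S S' : WithBot mo.syn} (h : S ≤ S') {L : Multiset (Ent σ K n)}
    (hL : Ok mo F B S L) : Ok mo F B S' L :=
  fun e he => ⟨(hL e he).1, (hL e he).2.1, (hL e he).2.2.1, (hL e he).2.2.2.trans h⟩

@[simp] lemma psum_zero : psum F (0 : Multiset (Ent σ K n)) = 0 := rfl

lemma psum_cons (e : Ent σ K n) (L : Multiset (Ent σ K n)) :
    psum F (e ::ₘ L) = vE F e + psum F L := by
  simp [psum]

lemma psum_add (L L' : Multiset (Ent σ K n)) :
    psum F (L + L') = psum F L + psum F L' := by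
  simp [psum]

lemma exists_sup_mem {A C : Type*} [LinearOrder C] [OrderBot C] (g : A → C)
    {L : Multiset A} (h : L ≠ 0) : ∃ e ∈ L, (L.map g).sup = g e := by
  induction L using Multiset.induction_on with
  | empty => exact absurd rfl h
  | cons e t ih =>
    by_cases ht : t = 0
    · subst ht
      exact ⟨e, Multiset.mem_cons_self e 0, by simp⟩
    · obtain ⟨e', he', hsup⟩ := ih ht
      rcases le_total (g e) (g e') with hle | hle
      · refine ⟨e', Multiset.mem_cons_of_mem he', ?_⟩
        simp [hsup, sup_eq_right.mpr hle]
      · refine ⟨e, Multiset.mem_cons_self e t, ?_⟩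
        simp [hsup, sup_eq_left.mpr hle]

lemma support_add' {p q : MvPolynomial σ K} {x : σ →₀ ℕ} (h : x ∈ (p + q).support) :
    x ∈ p.support ∨ x ∈ q.support := by
  classical exact Finset.mem_union.mp (MvPolynomial.support_add h)

lemma support_psum {L : Multiset (Ent σ K n)} {D : m.syn} (h : ∀ e ∈ L, fE m F e ≤ D) :
    ∀ q ∈ (psum F L).support, m.toSyn q ≤ D := by
  induction L using Multiset.induction_on with
  | empty => intro q hq; simp at hq
  | cons e t ih =>
    intro q hq
    rw [psum_cons] at hq
    rcases support_add' hq with hq | hq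
    · exact (support_monomial_mul_le hq).trans (h e (Multiset.mem_cons_self e t))
    · exact ih (fun e' he' => h e' (Multiset.mem_cons_of_mem he')) q hq

lemma coeff_psum (L : Multiset (Ent σ K n)) (q : σ →₀ ℕ) :
    (psum F L).coeff q = (L.map fun e => (vE F e).coeff q).sum := by
  induction L using Multiset.induction_on with
  | empty => simp
  | cons e t ih => simp [psum_cons, ih]

/-- `SRedToZero` gives a bounded representation. -/
lemma extract {α : Fin n → MvPolynomial σ K} (h : SRedToZero m mo F B α) (D : m.syn)
    (hD : ∀ q ∈ (piMap F α).support, m.toSyn q ≤ D) :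
    ∃ L : Multiset (Ent σ K n), Ok mo F B (sig mo α) L ∧ (∀ e ∈ L, fE m F e ≤ D) ∧
      psum F L = piMap F α ∧ (piMap F α = 0 → L = 0) := by
  obtain ⟨γ, hchain, hγ⟩ := h
  induction hchain using Relation.ReflTransGen.head_induction_on with
  | refl => exact ⟨0, fun e he => absurd he (by simp), fun e he => absurd he (by simp),
      by simp [hγ], fun _ => rfl⟩
  | @head α₁ α₂ hstep hchain ih =>
    obtain ⟨β, hβB, a, c, hc, hπβ, hmem, hcoeff, hsig, heq⟩ := hstep
    have hπ2 : piMap F α₂ = piMap F α₁ - MvPolynomial.monomial a c * piMap F β := by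
      rw [heq]
      have : (fun i => α₁ i - MvPolynomial.monomial a c * β i)
          = (fun i => α₁ i - mulV a c β i) := rfl
      rw [this, piMap_sub, piMap_mulV]
    have hsig2 : sig mo α₂ ≤ sig mo α₁ := by
      rw [heq]
      have : (fun i => α₁ i - MvPolynomial.monomial a c * β i)
          = (fun i => α₁ i - mulV a c β i) := rfl
      rw [this]
      exact (sig_sub_le (mo := mo)).trans (max_le le_rfl hsig)
    have hD2 : ∀ q ∈ (piMap F α₂).support, m.toSyn q ≤ D := by
      intro q hq
      rw [hπ2, sub_eq_add_neg] at hq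
      rcases support_add' hq with hq | hq
      · exact hD q hq
      · rw [MvPolynomial.support_neg] at hq
        exact (support_monomial_mul_le hq).trans (hD _ hmem)
    obtain ⟨L₂, hOk₂, hb₂, hp₂, -⟩ := ih hD2
    refine ⟨(a, c, β) ::ₘ L₂, ?_, ?_, ?_, ?_⟩
    · intro e he
      rcases Multiset.mem_cons.mp he with rfl | he
      · exact ⟨hβB, hπβ, hc, hsig⟩
      · exact (hOk₂.mono hsig2) e he
    · intro e he
      rcases Multiset.mem_cons.mp he with rfl | he
      · exact hD _ hmem
      · exact hb₂ e he
    · rw [psum_cons, hp₂, hπ2, vE]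
      ring
    · intro h0
      exfalso
      rw [h0] at hmem
      simp at hmem

variable {m : MonomialOrder σ} {mo : ModOrder σ n m}
  {F : Fin n → MvPolynomial σ K} {B : Set (Fin n → MvPolynomial σ K)}

/-- the lead term of `π γ` admits an 𝔰-reduction -/
def TopRed (m : MonomialOrder σ) (mo : ModOrder σ n m) (F : Fin n → MvPolynomial σ K)
    (B : Set (Fin n → MvPolynomial σ K)) (γ : Fin n → MvPolynomial σ K) : Prop :=
  ∃ β ∈ B, ∃ (a : σ →₀ ℕ) (c : K), c ≠ 0 ∧ piMap F β ≠ 0 ∧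
    a + lm m (piMap F β) = lm m (piMap F γ) ∧
    c * lc m (piMap F β) = lc m (piMap F γ) ∧
    sig mo (mulV a c β) ≤ sig mo γ

lemma msupport_ne_empty_of_piMap {β : Fin n → MvPolynomial σ K} (h : piMap F β ≠ 0) :
    ¬ msupport β = ∅ := by
  intro he
  exact h (by rw [msupport_eq_empty he]; exact piMap_zero)

lemma step_of_topRed {γ : Fin n → MvPolynomial σ K} (h : TopRed m mo F B γ)
    (hγ : piMap F γ ≠ 0) :
    ∃ γ', SRedStep m mo F B γ γ' ∧ sig mo γ' ≤ sig mo γ ∧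
      (piMap F γ' = 0 ∨ m.toSyn (lm m (piMap F γ')) < m.toSyn (lm m (piMap F γ))) := by
  obtain ⟨β, hβB, a, c, hc, hπβ, hlm, hlc, hsig⟩ := h
  set γ' : Fin n → MvPolynomial σ K := fun i => γ i - MvPolynomial.monomial a c * β i with hγ'
  have hmem : a + lm m (piMap F β) ∈ (piMap F γ).support := by
    rw [hlm]; exact lm_mem_support hγ
  have hcoeff : c * lc m (piMap F β) = (piMap F γ).coeff (a + lm m (piMap F β)) := by
    rw [hlm, hlc]; rfl
  have hπ' : piMap F γ' = piMap F γ - MvPolynomial.monomial a c * piMap F β := by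
    rw [hγ']
    have : (fun i => γ i - MvPolynomial.monomial a c * β i)
        = (fun i => γ i - mulV a c β i) := rfl
    rw [this, piMap_sub, piMap_mulV]
  have hsig' : sig mo γ' ≤ sig mo γ := by
    rw [hγ']
    have : (fun i => γ i - MvPolynomial.monomial a c * β i)
        = (fun i => γ i - mulV a c β i) := rfl
    rw [this]
    exact (sig_sub_le (mo := mo)).trans (max_le le_rfl hsig)
  refine ⟨γ', ⟨β, hβB, a, c, hc, hπβ, hmem, hcoeff, hsig, rfl⟩, hsig', ?_⟩
  by_cases h0 : piMap F γ' = 0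
  · exact Or.inl h0
  · refine Or.inr ?_
    have hsupp : ∀ q ∈ (piMap F γ').support, m.toSyn q ≤ m.toSyn (lm m (piMap F γ)) := by
      intro q hq
      rw [hπ', sub_eq_add_neg] at hq
      rcases support_add' hq with hq | hq
      · exact le_toSyn_lm hq
      · rw [MvPolynomial.support_neg] at hq
        exact (support_monomial_mul_le hq).trans_eq (by rw [hlm])
    have hne : lm m (piMap F γ') ≠ lm m (piMap F γ) := by
      intro he
      have h1 : (piMap F γ').coeff (lm m (piMap F γ)) = 0 := by
        rw [hπ', MvPolynomial.coeff_sub, ← hlm, coeff_monomial_mul_lm, hlm, hlc]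
        exact sub_self _
      have := MvPolynomial.mem_support_iff.mp (lm_mem_support (m := m) h0)
      rw [he] at this
      exact this h1
    exact lt_of_le_of_ne (hsupp _ (lm_mem_support h0))
      (fun he => hne (m.toSyn.injective he))

open Classical in
/-- achievers: entries whose product monomial attains the maximum -/
noncomputable def AAs (m : MonomialOrder σ) (F : Fin n → MvPolynomial σ K)
    (L : Multiset (Ent σ K n)) : Multiset (Ent σ K n) :=
  L.filter (fun e => fE m F e = (L.map (fE m F)).sup)

/-- maximal signature among achievers -/
noncomputable def sS (m : MonomialOrder σ) (mo : ModOrder σ n m)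
    (F : Fin n → MvPolynomial σ K) (L : Multiset (Ent σ K n)) : WithBot mo.syn :=
  ((AAs m F L).map (sgE mo)).sup

open Classical in
/-- number of achievers of maximal signature -/
noncomputable def kN (m : MonomialOrder σ) (mo : ModOrder σ n m)
    (F : Fin n → MvPolynomial σ K) (L : Multiset (Ent σ K n)) : ℕ :=
  Multiset.card ((AAs m F L).filter (fun e => sgE mo e = sS m mo F L))

/-- the measure of a representation -/
noncomputable def meas (m : MonomialOrder σ) (mo : ModOrder σ n m)
    (F : Fin n → MvPolynomial σ K) (L : Multiset (Ent σ K n)) :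
    m.syn × (WithBot mo.syn × ℕ) :=
  ((L.map (fE m F)).sup, sS m mo F L, kN m mo F L)

lemma fE_le_sup {L : Multiset (Ent σ K n)} {e : Ent σ K n} (h : e ∈ L) :
    fE m F e ≤ (L.map (fE m F)).sup :=
  Multiset.le_sup (Multiset.mem_map_of_mem _ h)

lemma sgE_le_sS {L : Multiset (Ent σ K n)} {e : Ent σ K n} (h : e ∈ L)
    (hf : fE m F e = (L.map (fE m F)).sup) : sgE mo e ≤ sS m mo F L := by
  classical
  exact Multiset.le_sup (Multiset.mem_map_of_mem _ (Multiset.mem_filter.mpr ⟨h, by simpa using hf⟩))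

/-- The regular-case measure decrease. -/
lemma dec1 {t1 t2 : Ent σ K n} {L₀ New L : Multiset (Ent σ K n)}
    (hL : L = t1 ::ₘ t2 ::ₘ L₀)
    (hsg2 : sgE mo t2 < sS m mo F L)
    (honly : ∀ e ∈ L₀, fE m F e = (L.map (fE m F)).sup → sgE mo e < sS m mo F L)
    (hNew : ∀ e ∈ New, fE m F e < (L.map (fE m F)).sup ∨
      (fE m F e = (L.map (fE m F)).sup ∧ sgE mo e < sS m mo F L)) :
    Prod.Lex (· < ·) (Prod.Lex (· < ·) (· < ·)) (meas m mo F (L₀ + New)) (meas m mo F L) := by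
  classical
  have hMle : ((L₀ + New).map (fE m F)).sup ≤ (L.map (fE m F)).sup := by
    apply Multiset.sup_le.mpr
    intro b hb
    obtain ⟨e, he, rfl⟩ := Multiset.mem_map.mp hb
    rcases Multiset.mem_add.mp he with he | he
    · exact fE_le_sup (by rw [hL]; exact Multiset.mem_cons_of_mem (Multiset.mem_cons_of_mem he))
    · rcases hNew e he with h | h
      · exact h.le
      · exact h.1.le
  rcases lt_or_eq_of_le hMle with hlt | heq
  · exact Prod.Lex.left _ _ hlt
  · have hach : ∀ e ∈ AAs m F (L₀ + New), sgE mo e < sS m mo F L := by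
      intro e he
      rw [AAs, Multiset.mem_filter] at he
      obtain ⟨heL, hfe⟩ := he
      rw [heq] at hfe
      rcases Multiset.mem_add.mp heL with h | h
      · exact honly e h hfe
      · rcases hNew e h with h' | h'
        · rw [hfe] at h'; exact absurd h' (lt_irrefl _)
        · exact h'.2
    have hlt2 : sS m mo F (L₀ + New) < sS m mo F L := by
      rw [sS]
      by_cases hA : AAs m F (L₀ + New) = 0
      · rw [hA]
        simpa using bot_le.trans_lt hsg2
      · obtain ⟨e, he, hsup⟩ := exists_sup_mem (sgE mo) hA
        rw [hsup]
        exact hach e he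
    show Prod.Lex _ _ (((L₀ + New).map (fE m F)).sup, sS m mo F (L₀ + New), kN m mo F (L₀ + New)) _
    rw [heq]
    exact Prod.Lex.right _ (Prod.Lex.left _ _ hlt2)

/-- The singular-case measure decrease. -/
lemma dec2 {t1 t2 : Ent σ K n} {L₀ Nu Nm L : Multiset (Ent σ K n)}
    (hL : L = t1 ::ₘ t2 ::ₘ L₀)
    (hf1 : fE m F t1 = (L.map (fE m F)).sup) (hf2 : fE m F t2 = (L.map (fE m F)).sup)
    (hsg1 : sgE mo t1 = sS m mo F L) (hsg2 : sgE mo t2 = sS m mo F L)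
    (hNu : ∀ e ∈ Nu, fE m F e ≤ (L.map (fE m F)).sup ∧ sgE mo e < sS m mo F L)
    (hNm : ∀ e ∈ Nm, fE m F e ≤ (L.map (fE m F)).sup ∧ sgE mo e ≤ sS m mo F L)
    (hNmcard : Multiset.card Nm ≤ 1) :
    Prod.Lex (· < ·) (Prod.Lex (· < ·) (· < ·)) (meas m mo F (L₀ + Nu + Nm)) (meas m mo F L) := by
  classical
  set M := (L.map (fE m F)).sup with hM
  set s := sS m mo F L with hs
  have hMle : ((L₀ + Nu + Nm).map (fE m F)).sup ≤ M := by
    apply Multiset.sup_le.mpr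
    intro b hb
    obtain ⟨e, he, rfl⟩ := Multiset.mem_map.mp hb
    rcases Multiset.mem_add.mp he with he | he
    · rcases Multiset.mem_add.mp he with he | he
      · exact fE_le_sup (by rw [hL]; exact Multiset.mem_cons_of_mem (Multiset.mem_cons_of_mem he))
      · exact (hNu e he).1
    · exact (hNm e he).1
  rcases lt_or_eq_of_le hMle with hlt | heq
  · exact Prod.Lex.left _ _ hlt
  · have hach : ∀ e ∈ AAs m F (L₀ + Nu + Nm), sgE mo e ≤ s := by
      intro e he
      rw [AAs, Multiset.mem_filter] at he
      obtain ⟨heL, hfe⟩ := he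
      rw [heq] at hfe
      rcases Multiset.mem_add.mp heL with he' | he'
      · rcases Multiset.mem_add.mp he' with he' | he'
        · exact sgE_le_sS (by rw [hL]; exact Multiset.mem_cons_of_mem (Multiset.mem_cons_of_mem he')) hfe
        · exact (hNu e he').2.le
      · exact (hNm e he').2
    have hsle : sS m mo F (L₀ + Nu + Nm) ≤ s := by
      rw [sS]
      apply Multiset.sup_le.mpr
      intro b hb
      obtain ⟨e, he, rfl⟩ := Multiset.mem_map.mp hb
      exact hach e he
    rcases lt_or_eq_of_le hsle with hslt | hseq
    · show Prod.Lex _ _ (((L₀ + Nu + Nm).map (fE m F)).sup, sS m mo F (L₀ + Nu + Nm), _) _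
      rw [heq]
      exact Prod.Lex.right _ (Prod.Lex.left _ _ hslt)
    · -- count decrease
      have hAL : AAs m F L = t1 ::ₘ t2 ::ₘ L₀.filter (fun e => fE m F e = M) := by
        rw [AAs, ← hM, hL, Multiset.filter_cons_of_pos _ (by simpa using hf1),
          Multiset.filter_cons_of_pos _ (by simpa using hf2)]
      have hk : kN m mo F L = 2 + Multiset.card (((L₀.filter (fun e => fE m F e = M)).filter
          (fun e => sgE mo e = s))) := by
        rw [kN, hAL, ← hs, Multiset.filter_cons_of_pos _ (by simpa using hsg1),
          Multiset.filter_cons_of_pos _ (by simpa using hsg2)]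
        simp only [Multiset.card_cons]
        omega
      have hk' : kN m mo F (L₀ + Nu + Nm) ≤ 1 + Multiset.card (((L₀.filter
          (fun e => fE m F e = M)).filter (fun e => sgE mo e = s))) := by
        rw [kN, AAs, heq, hseq]
        rw [Multiset.filter_add, Multiset.filter_add, Multiset.filter_add, Multiset.filter_add]
        rw [Multiset.card_add, Multiset.card_add]
        have hNu0 : ((Nu.filter (fun e => fE m F e = M)).filter (fun e => sgE mo e = s)) = 0 := by
          apply Multiset.eq_zero_of_forall_notMem
          intro e he
          rw [Multiset.mem_filter] at he
          have := (hNu e (Multiset.mem_of_mem_filter he.1)).2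
          rw [he.2] at this
          exact absurd this (lt_irrefl _)
        have hNm1 : Multiset.card ((Nm.filter (fun e => fE m F e = M)).filter
            (fun e => sgE mo e = s)) ≤ 1 :=
          le_trans (Multiset.card_le_card ((Multiset.filter_le _ _).trans (Multiset.filter_le _ _)))
            hNmcard
        rw [hNu0]
        simp only [Multiset.card_zero]
        omega
      show Prod.Lex _ _ (((L₀ + Nu + Nm).map (fE m F)).sup, sS m mo F (L₀ + Nu + Nm),
        kN m mo F (L₀ + Nu + Nm)) _
      rw [heq, hseq]
      show Prod.Lex _ _ (M, s, kN m mo F (L₀ + Nu + Nm)) (M, s, kN m mo F L)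
      refine Prod.Lex.right _ (Prod.Lex.right _ ?_)
      omega

lemma shf_shf (b x : σ →₀ ℕ) (P : (σ →₀ ℕ) × Fin n) : shf b (shf x P) = shf (b + x) P := by
  simp [shf, add_assoc]

lemma fE_shift (b : σ →₀ ℕ) (d : K) (e : Ent σ K n) :
    fE m F ((b + e.1, d * e.2.1, e.2.2) : Ent σ K n) = m.toSyn b + fE m F e := by
  simp [fE, add_assoc]

lemma psum_shift (b : σ →₀ ℕ) (d : K) (L : Multiset (Ent σ K n)) :
    psum F (L.map fun e => ((b + e.1, d * e.2.1, e.2.2) : Ent σ K n)) =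
      MvPolynomial.monomial b d * psum F L := by
  induction L using Multiset.induction_on with
  | empty => simp
  | cons e t ih =>
    rw [Multiset.map_cons, psum_cons, psum_cons, ih, mul_add]
    congr 1
    show MvPolynomial.monomial (b + e.1) (d * e.2.1) * piMap F e.2.2 = _
    rw [vE, ← mul_assoc, MvPolynomial.monomial_mul]

lemma sgE_eq {e : Ent σ K n} (hc : e.2.1 ≠ 0) (hβ : piMap F e.2.2 ≠ 0) :
    ∃ P ∈ msupport e.2.2, sgE mo e = (mo.toSyn (shf e.1 P) : WithBot mo.syn) ∧
      ∀ Q ∈ msupport e.2.2, mo.toSyn Q ≤ mo.toSyn P := by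
  obtain ⟨P, hP, _, hmax⟩ := exists_sig (mo := mo) (msupport_ne_empty_of_piMap hβ)
  exact ⟨P, hP, sig_mulV_eq hc hP hmax, hmax⟩

lemma exists_fE_of_mem_support {L : Multiset (Ent σ K n)} {q : σ →₀ ℕ}
    (h : q ∈ (psum F L).support) : ∃ e ∈ L, m.toSyn q ≤ fE m F e := by
  induction L using Multiset.induction_on with
  | empty => simp [psum_zero] at h
  | cons e s ih =>
    rw [psum_cons] at h
    rcases support_add' h with h | h
    · exact ⟨e, Multiset.mem_cons_self e s, support_monomial_mul_le h⟩
    · obtain ⟨e', he', hle'⟩ := ih h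
      exact ⟨e', Multiset.mem_cons_of_mem he', hle'⟩

lemma topRed_of_unique {γ : Fin n → MvPolynomial σ K} (hπγ : piMap F γ ≠ 0)
    {L : Multiset (Ent σ K n)} (hOk : Ok mo F B (sig mo γ) L) (hsum : psum F L = piMap F γ)
    {t : Ent σ K n} (hA : AAs m F L = {t}) : TopRed m mo F B γ := by
  classical
  set M := (L.map (fE m F)).sup with hM
  have htA : t ∈ AAs m F L := by rw [hA]; exact Multiset.mem_singleton_self t
  have htL : t ∈ L := Multiset.mem_of_mem_filter htA
  have hft : fE m F t = M := by
    have := Multiset.mem_filter.mp htA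
    simpa using this.2
  set Q : σ →₀ ℕ := m.toSyn.symm M with hQ
  have hMQ : m.toSyn Q = M := m.toSyn.apply_symm_apply M
  have hQt : t.1 + lm m (piMap F t.2.2) = Q := by
    apply m.toSyn.injective
    rw [hMQ]
    exact hft
  obtain ⟨L₁, hL₁⟩ : ∃ L₁, L = t ::ₘ L₁ := ⟨L.erase t, (Multiset.cons_erase htL).symm⟩
  have hL₁lt : ∀ e ∈ L₁, fE m F e < M := by
    intro e he
    have heL : e ∈ L := by rw [hL₁]; exact Multiset.mem_cons_of_mem he
    rcases lt_or_eq_of_le (fE_le_sup (m := m) (F := F) heL) with h | h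
    · exact h
    · exfalso
      have heA : e ∈ AAs m F L := Multiset.mem_filter.mpr ⟨heL, by simpa using h⟩
      have het : e = t := by rw [hA] at heA; exact Multiset.mem_singleton.mp heA
      subst het
      have h2 : (2 : ℕ) ≤ Multiset.count e L := by
        rw [hL₁]
        have : 1 ≤ Multiset.count e L₁ := Multiset.one_le_count_iff_mem.mpr he
        simp [Multiset.count_cons_self]
        omega
      have h3 : Multiset.count e (AAs m F L) = Multiset.count e L := by
        rw [AAs]
        exact Multiset.count_filter_of_pos (by simpa using hft)
      have h4 : Multiset.count e (AAs m F L) ≤ 1 := by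
        rw [hA]
        simp [Multiset.count_singleton]
      omega
  have hcoeffQ : (piMap F γ).coeff Q = t.2.1 * lc m (piMap F t.2.2) := by
    rw [← hsum, hL₁, psum_cons, MvPolynomial.coeff_add]
    have h1 : (vE F t).coeff Q = t.2.1 * lc m (piMap F t.2.2) := by
      rw [vE, ← hQt]
      exact coeff_monomial_mul_lm _
    have h2 : (psum F L₁).coeff Q = 0 := by
      by_contra h0
      obtain ⟨e, he, hle⟩ := exists_fE_of_mem_support (MvPolynomial.mem_support_iff.mpr h0)
      rw [hMQ] at hle
      exact absurd (lt_of_le_of_lt hle (hL₁lt e he)) (lt_irrefl M)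
    rw [h1, h2, add_zero]
  have hOkt := hOk t htL
  have hc0 : t.2.1 * lc m (piMap F t.2.2) ≠ 0 := mul_ne_zero hOkt.2.2.1 (lc_ne_zero hOkt.2.1)
  have hlmγ : lm m (piMap F γ) = Q := by
    apply lm_unique (by rw [hcoeffQ]; exact hc0)
    intro q hq
    rw [hMQ]
    rw [← hsum] at hq
    exact support_psum (fun e he => fE_le_sup he) q hq
  refine ⟨t.2.2, hOkt.1, t.1, t.2.1, hOkt.2.2.1, hOkt.2.1, ?_, ?_, hOkt.2.2.2⟩
  · rw [hQt, hlmγ]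
  · have h5 : lc m (piMap F γ) = t.2.1 * lc m (piMap F t.2.2) := by
      unfold lc
      rw [hlmγ, hcoeffQ]
      rfl
    exact h5.symm

lemma topRed_of_rep
    {T : (σ →₀ ℕ) × Fin n}
    (hpairs : ∀ α ∈ B, ∀ β ∈ B, piMap F α ≠ 0 → piMap F β ≠ 0 →
      sig mo (mulV (mlcm (lm m (piMap F α)) (lm m (piMap F β)) - lm m (piMap F α))
          (lc m (piMap F α))⁻¹ α) ≠
        sig mo (mulV (mlcm (lm m (piMap F α)) (lm m (piMap F β)) - lm m (piMap F β))
          (lc m (piMap F β))⁻¹ β) →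
      max (sig mo (mulV (mlcm (lm m (piMap F α)) (lm m (piMap F β)) - lm m (piMap F α))
            (lc m (piMap F α))⁻¹ α))
          (sig mo (mulV (mlcm (lm m (piMap F α)) (lm m (piMap F β)) - lm m (piMap F β))
            (lc m (piMap F β))⁻¹ β)) < (mo.toSyn T : WithBot mo.syn) →
      SRedToZero m mo F B (spair m F α β))
    {γ : Fin n → MvPolynomial σ K} (hπγ : piMap F γ ≠ 0)
    (hT : sig mo γ < (mo.toSyn T : WithBot mo.syn))
    (IH0 : ∀ δ, sig mo δ < sig mo γ → SRedToZero m mo F B δ) :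
    ∀ L : Multiset (Ent σ K n), Ok mo F B (sig mo γ) L → psum F L = piMap F γ →
      TopRed m mo F B γ := by
  classical
  have hwf : WellFounded (Prod.Lex (· < · : m.syn → m.syn → Prop)
      (Prod.Lex (· < · : WithBot mo.syn → WithBot mo.syn → Prop) (· < · : ℕ → ℕ → Prop))) := by
    haveI : WellFoundedLT mo.syn := ⟨mo.wf⟩
    exact wellFounded_lt.prod_lex (wellFounded_lt.prod_lex wellFounded_lt)
  suffices h : ∀ p, ∀ L : Multiset (Ent σ K n), meas m mo F L = p →
      Ok mo F B (sig mo γ) L → psum F L = piMap F γ → TopRed m mo F B γ by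
    intro L h1 h2
    exact h _ L rfl h1 h2
  intro p
  refine hwf.induction (C := fun p => ∀ L : Multiset (Ent σ K n), meas m mo F L = p →
      Ok mo F B (sig mo γ) L → psum F L = piMap F γ → TopRed m mo F B γ) p ?_
  clear p
  intro p IH L hp hOk hsum
  subst hp
  set M := (L.map (fE m F)).sup with hM
  have hLne : L ≠ 0 := by
    intro h0
    rw [h0] at hsum
    exact hπγ hsum.symm
  have hAne : AAs m F L ≠ 0 := by
    obtain ⟨e, he, hsup⟩ := exists_sup_mem (fE m F) hLne
    intro h0
    have : e ∈ AAs m F L := Multiset.mem_filter.mpr ⟨he, by simp [hsup.symm]⟩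
    rw [h0] at this
    simp at this
  obtain ⟨t1, ht1A, hssup⟩ := exists_sup_mem (sgE mo) hAne
  have hsstar : sS m mo F L = sgE mo t1 := hssup
  by_cases hA1 : AAs m F L = {t1}
  · exact topRed_of_unique hπγ hOk hsum hA1
  obtain ⟨A₁, hA₁⟩ : ∃ A₁, AAs m F L = t1 ::ₘ A₁ :=
    ⟨(AAs m F L).erase t1, (Multiset.cons_erase ht1A).symm⟩
  have hA₁ne : A₁ ≠ 0 := by
    intro h0
    rw [h0] at hA₁
    exact hA1 hA₁
  have ht1L : t1 ∈ L := Multiset.mem_of_mem_filter ht1A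
  have hf1 : fE m F t1 = M := by simpa using (Multiset.mem_filter.mp ht1A).2
  have hOk1 := hOk t1 ht1L
  obtain ⟨P1, hP1mem, hsg1eq, hP1max⟩ := sgE_eq (mo := mo) hOk1.2.2.1 hOk1.2.1
  -- choose the second achiever t2
  by_cases hk2 : ∃ e ∈ A₁, sgE mo e = sgE mo t1
  · -- SINGULAR CASE
    obtain ⟨t2, ht2A₁, ht2sg⟩ := hk2
    have ht2A : t2 ∈ AAs m F L := by rw [hA₁]; exact Multiset.mem_cons_of_mem ht2A₁
    have ht2L : t2 ∈ L := Multiset.mem_of_mem_filter ht2A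
    have hf2 : fE m F t2 = M := by simpa using (Multiset.mem_filter.mp ht2A).2
    have hOk2 := hOk t2 ht2L
    obtain ⟨P2, hP2mem, hsg2eq, hP2max⟩ := sgE_eq (mo := mo) hOk2.2.2.1 hOk2.2.1
    -- split L
    have hAle : AAs m F L ≤ L := Multiset.filter_le _ L
    have hsub : (t1 ::ₘ t2 ::ₘ 0) ≤ L := by
      refine le_trans ?_ hAle
      rw [hA₁]
      exact Multiset.cons_le_cons t1 (Multiset.singleton_le.mpr ht2A₁)
    obtain ⟨L₀, hL₀⟩ := Multiset.le_iff_exists_add.mp hsub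
    have hL : L = t1 ::ₘ t2 ::ₘ L₀ := by
      rw [hL₀]
      simp [Multiset.cons_add]
    -- equal signatures give equal shifted module monomials
    have hPP : shf t1.1 P1 = shf t2.1 P2 := by
      apply mo.toSyn.injective
      have := ht2sg
      rw [hsg1eq, hsg2eq] at this
      exact_mod_cast this.symm
    set b1 : K := (t1.2.2 P1.2).coeff P1.1 with hb1
    set b2 : K := (t2.2.2 P2.2).coeff P2.1 with hb2
    have hb1ne : b1 ≠ 0 := mem_msupport.mp hP1mem
    have hb2ne : b2 ≠ 0 := mem_msupport.mp hP2mem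
    set ee : K := t1.2.1 * b1 * b2⁻¹ with hee
    have heene : ee ≠ 0 := mul_ne_zero (mul_ne_zero hOk1.2.2.1 hb1ne) (inv_ne_zero hb2ne)
    set u : Fin n → MvPolynomial σ K :=
      fun i => mulV t1.1 t1.2.1 t1.2.2 i - mulV t2.1 ee t2.2.2 i with hu
    have hsigu : sig mo u < (mo.toSyn (shf t1.1 P1) : WithBot mo.syn) := by
      apply sig_lt_coe_of
      intro Qq hQq
      have hle : mo.toSyn Qq ≤ mo.toSyn (shf t1.1 P1) := by
        rcases msupport_sub hQq with h | h
        · obtain ⟨Q', hQ', rfl⟩ := (mem_msupport_mulV hOk1.2.2.1).mp h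
          exact toSyn_shf_le (hP1max Q' hQ')
        · obtain ⟨Q', hQ', rfl⟩ := (mem_msupport_mulV heene).mp h
          rw [hPP]
          exact toSyn_shf_le (hP2max Q' hQ')
      have hne : Qq ≠ shf t1.1 P1 := by
        intro hqe
        subst hqe
        rw [mem_msupport] at hQq
        apply hQq
        have hc1 : (mulV t1.1 t1.2.1 t1.2.2 (shf t1.1 P1).2).coeff (shf t1.1 P1).1
            = t1.2.1 * b1 := by
          show (MvPolynomial.monomial t1.1 t1.2.1 * t1.2.2 P1.2).coeff (t1.1 + P1.1) = _
          rw [MvPolynomial.coeff_monomial_mul, hb1]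
        have hc2 : (mulV t2.1 ee t2.2.2 (shf t1.1 P1).2).coeff (shf t1.1 P1).1
            = ee * b2 := by
          rw [hPP]
          show (MvPolynomial.monomial t2.1 ee * t2.2.2 P2.2).coeff (t2.1 + P2.1) = _
          rw [MvPolynomial.coeff_monomial_mul, hb2]
        show (mulV t1.1 t1.2.1 t1.2.2 (shf t1.1 P1).2).coeff (shf t1.1 P1).1
          - (mulV t2.1 ee t2.2.2 (shf t1.1 P1).2).coeff (shf t1.1 P1).1 = 0
        rw [hc1, hc2, hee, inv_mul_cancel_right₀ hb2ne]
        exact sub_self _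
      exact lt_of_le_of_ne hle (fun hteq => hne (mo.toSyn.injective hteq))
    have hsigu2 : sig mo u < sig mo γ :=
      lt_of_lt_of_le hsigu (by rw [← hsg1eq]; exact hOk1.2.2.2)
    have hured : SRedToZero m mo F B u := IH0 u hsigu2
    have hπu : piMap F u = MvPolynomial.monomial t1.1 t1.2.1 * piMap F t1.2.2
        - MvPolynomial.monomial t2.1 ee * piMap F t2.2.2 := by
      rw [hu]
      rw [piMap_sub, piMap_mulV, piMap_mulV]
    have hbu : ∀ q ∈ (piMap F u).support, m.toSyn q ≤ M := by
      intro q hq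
      rw [hπu, sub_eq_add_neg] at hq
      rcases support_add' hq with h | h
      · exact (support_monomial_mul_le h).trans_eq hf1
      · rw [MvPolynomial.support_neg] at h
        exact (support_monomial_mul_le h).trans_eq hf2
    obtain ⟨Lu, hLuOk, hLub, hLusum, -⟩ := extract hured M hbu
    set cM : K := t2.2.1 + ee with hcM
    set Nm : Multiset (Ent σ K n) := if cM = 0 then 0 else {(t2.1, cM, t2.2.2)} with hNm
    have hpsNm : psum F Nm = MvPolynomial.monomial t2.1 cM * piMap F t2.2.2 := by
      rw [hNm]
      split_ifs with h0
      · rw [h0]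
        simp
      · show psum F ((t2.1, cM, t2.2.2) ::ₘ 0) = _
        rw [psum_cons, psum_zero, add_zero]
        rfl
    -- the new representation
    have hsum' : psum F (L₀ + Lu + Nm) = piMap F γ := by
      rw [psum_add, psum_add, hLusum, hpsNm, hπu, ← hsum, hL, psum_cons, psum_cons]
      show _ = vE F t1 + (vE F t2 + psum F L₀)
      rw [vE, vE, hcM, map_add, add_mul]
      ring
    have hOk' : Ok mo F B (sig mo γ) (L₀ + Lu + Nm) := by
      intro e he
      rcases Multiset.mem_add.mp he with he | he
      · rcases Multiset.mem_add.mp he with he | he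
        · exact hOk e (by rw [hL]; exact Multiset.mem_cons_of_mem (Multiset.mem_cons_of_mem he))
        · exact (hLuOk.mono hsigu2.le) e he
      · rw [hNm] at he
        split_ifs at he with h0
        · simp at he
        · have : e = (t2.1, cM, t2.2.2) := by simpa using he
          subst this
          refine ⟨hOk2.1, hOk2.2.1, h0, ?_⟩
          show sig mo (mulV t2.1 cM t2.2.2) ≤ _
          rw [sig_mulV_eq h0 hP2mem hP2max, ← hsg2eq]
          exact hOk2.2.2.2
    -- measure decrease
    refine IH (meas m mo F (L₀ + Lu + Nm)) ?_ _ rfl hOk' hsum'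
    refine dec2 hL hf1 hf2 hsstar.symm ?_ ?_ ?_ ?_
    · rw [hsstar, ← ht2sg]
    · intro e he
      refine ⟨hLub e he, ?_⟩
      calc sgE mo e ≤ sig mo u := (hLuOk e he).2.2.2
      _ < (mo.toSyn (shf t1.1 P1) : WithBot mo.syn) := hsigu
      _ = sS m mo F L := by rw [hsstar, hsg1eq]
    · intro e he
      rw [hNm] at he
      split_ifs at he with h0
      · simp at he
      · have : e = (t2.1, cM, t2.2.2) := by simpa using he
        subst this
        constructor
        · show fE m F (t2.1, cM, t2.2.2) ≤ M
          have : fE m F ((t2.1, cM, t2.2.2) : Ent σ K n) = fE m F t2 := rfl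
          rw [this, hf2]
        · show sgE mo (t2.1, cM, t2.2.2) ≤ sS m mo F L
          show sig mo (mulV t2.1 cM t2.2.2) ≤ _
          rw [sig_mulV_eq h0 hP2mem hP2max, ← hsg2eq, hsstar, ← ht2sg]
    · rw [hNm]
      split_ifs
      · simp
      · simp
  · -- REGULAR CASE
    push_neg at hk2
    obtain ⟨t2, ht2A₁⟩ := Multiset.exists_mem_of_ne_zero hA₁ne
    have ht2A : t2 ∈ AAs m F L := by rw [hA₁]; exact Multiset.mem_cons_of_mem ht2A₁
    have ht2L : t2 ∈ L := Multiset.mem_of_mem_filter ht2A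
    have hf2 : fE m F t2 = M := by simpa using (Multiset.mem_filter.mp ht2A).2
    have hOk2 := hOk t2 ht2L
    obtain ⟨P2, hP2mem, hsg2eq, hP2max⟩ := sgE_eq (mo := mo) hOk2.2.2.1 hOk2.2.1
    have ht2lt : sgE mo t2 < sgE mo t1 :=
      lt_of_le_of_ne (by rw [← hsstar]; exact sgE_le_sS ht2L (by rw [hf2])) (hk2 t2 ht2A₁)
    have hAle : AAs m F L ≤ L := Multiset.filter_le _ L
    have hsub : (t1 ::ₘ t2 ::ₘ 0) ≤ L := by
      refine le_trans ?_ hAle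
      rw [hA₁]
      exact Multiset.cons_le_cons t1 (Multiset.singleton_le.mpr ht2A₁)
    obtain ⟨L₀, hL₀⟩ := Multiset.le_iff_exists_add.mp hsub
    have hL : L = t1 ::ₘ t2 ::ₘ L₀ := by
      rw [hL₀]
      simp [Multiset.cons_add]
    set lm1 := lm m (piMap F t1.2.2) with hlm1
    set lm2 := lm m (piMap F t2.2.2) with hlm2
    set lam := mlcm lm1 lm2 with hlam
    set Q : σ →₀ ℕ := m.toSyn.symm M with hQdef
    have hMQ : m.toSyn Q = M := m.toSyn.apply_symm_apply M
    have hQ1 : t1.1 + lm1 = Q := by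
      apply m.toSyn.injective
      rw [hMQ]
      exact hf1
    have hQ2 : t2.1 + lm2 = Q := by
      apply m.toSyn.injective
      rw [hMQ]
      exact hf2
    have hlam1 : lm1 ≤ lam := le_sup_left
    have hlam2 : lm2 ≤ lam := le_sup_right
    have hlamQ : lam ≤ Q := by
      rw [hlam, mlcm]
      refine sup_le ?_ ?_
      · rw [← hQ1]; exact le_add_self
      · rw [← hQ2]; exact le_add_self
    set b : σ →₀ ℕ := Q - lam with hbdef
    have hblam : b + lam = Q := by rw [hbdef]; exact tsub_add_cancel_of_le hlamQ
    have ha1 : b + (lam - lm1) = t1.1 := by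
      have h1 : t1.1 = Q - lm1 := eq_tsub_of_add_eq hQ1
      rw [hbdef, h1]
      exact tsub_add_tsub_cancel hlamQ hlam1
    have ha2 : b + (lam - lm2) = t2.1 := by
      have h1 : t2.1 = Q - lm2 := eq_tsub_of_add_eq hQ2
      rw [hbdef, h1]
      exact tsub_add_tsub_cancel hlamQ hlam2
    have hlc1 : lc m (piMap F t1.2.2) ≠ 0 := lc_ne_zero hOk1.2.1
    have hlc2 : lc m (piMap F t2.2.2) ≠ 0 := lc_ne_zero hOk2.2.1
    have hhalf1 : sig mo (mulV (lam - lm1) (lc m (piMap F t1.2.2))⁻¹ t1.2.2)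
        = (mo.toSyn (shf (lam - lm1) P1) : WithBot mo.syn) :=
      sig_mulV_eq (inv_ne_zero hlc1) hP1mem hP1max
    have hhalf2 : sig mo (mulV (lam - lm2) (lc m (piMap F t2.2.2))⁻¹ t2.2.2)
        = (mo.toSyn (shf (lam - lm2) P2) : WithBot mo.syn) :=
      sig_mulV_eq (inv_ne_zero hlc2) hP2mem hP2max
    have hshift1 : shf b (shf (lam - lm1) P1) = shf t1.1 P1 := by rw [shf_shf, ha1]
    have hshift2 : shf b (shf (lam - lm2) P2) = shf t2.1 P2 := by rw [shf_shf, ha2]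
    have hreg : sig mo (mulV (lam - lm1) (lc m (piMap F t1.2.2))⁻¹ t1.2.2)
        ≠ sig mo (mulV (lam - lm2) (lc m (piMap F t2.2.2))⁻¹ t2.2.2) := by
      rw [hhalf1, hhalf2]
      intro hcontra
      have h1 : shf (lam - lm1) P1 = shf (lam - lm2) P2 :=
        mo.toSyn.injective (by exact_mod_cast hcontra)
      have h2 : shf t1.1 P1 = shf t2.1 P2 := by rw [← hshift1, ← hshift2, h1]
      have h3 : sgE mo t1 = sgE mo t2 := by rw [hsg1eq, hsg2eq, h2]
      rw [h3] at ht2lt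
      exact absurd ht2lt (lt_irrefl _)
    have hmaxT : max (sig mo (mulV (lam - lm1) (lc m (piMap F t1.2.2))⁻¹ t1.2.2))
        (sig mo (mulV (lam - lm2) (lc m (piMap F t2.2.2))⁻¹ t2.2.2))
        < (mo.toSyn T : WithBot mo.syn) := by
      refine max_lt ?_ ?_
      · rw [hhalf1]
        calc (mo.toSyn (shf (lam - lm1) P1) : WithBot mo.syn)
            ≤ (mo.toSyn (shf b (shf (lam - lm1) P1)) : WithBot mo.syn) :=
              WithBot.coe_le_coe.mpr (le_toSyn_shf mo b _)
        _ = sgE mo t1 := by rw [hshift1, ← hsg1eq]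
        _ ≤ sig mo γ := hOk1.2.2.2
        _ < _ := hT
      · rw [hhalf2]
        calc (mo.toSyn (shf (lam - lm2) P2) : WithBot mo.syn)
            ≤ (mo.toSyn (shf b (shf (lam - lm2) P2)) : WithBot mo.syn) :=
              WithBot.coe_le_coe.mpr (le_toSyn_shf mo b _)
        _ = sgE mo t2 := by rw [hshift2, ← hsg2eq]
        _ ≤ sig mo γ := hOk2.2.2.2
        _ < _ := hT
    have hsp : SRedToZero m mo F B (spair m F t1.2.2 t2.2.2) :=
      hpairs t1.2.2 hOk1.1 t2.2.2 hOk2.1 hOk1.2.1 hOk2.2.1 hreg hmaxT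
    have hπsp : piMap F (spair m F t1.2.2 t2.2.2)
        = MvPolynomial.monomial (lam - lm1) (lc m (piMap F t1.2.2))⁻¹ * piMap F t1.2.2
          - MvPolynomial.monomial (lam - lm2) (lc m (piMap F t2.2.2))⁻¹ * piMap F t2.2.2 := by
      have hd : spair m F t1.2.2 t2.2.2 = fun i =>
          mulV (lam - lm1) (lc m (piMap F t1.2.2))⁻¹ t1.2.2 i
          - mulV (lam - lm2) (lc m (piMap F t2.2.2))⁻¹ t2.2.2 i := rfl
      rw [hd, piMap_sub, piMap_mulV, piMap_mulV]
    have hspb : ∀ q ∈ (piMap F (spair m F t1.2.2 t2.2.2)).support,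
        m.toSyn q < m.toSyn lam := by
      intro q hq
      have hle : m.toSyn q ≤ m.toSyn lam := by
        rw [hπsp, sub_eq_add_neg] at hq
        rcases support_add' hq with h | h
        · refine (support_monomial_mul_le h).trans_eq ?_
          rw [← hlm1, tsub_add_cancel_of_le hlam1]
        · rw [MvPolynomial.support_neg] at h
          refine (support_monomial_mul_le h).trans_eq ?_
          rw [← hlm2, tsub_add_cancel_of_le hlam2]
      have hne : q ≠ lam := by
        intro h0
        subst h0
        have e1 : (MvPolynomial.monomial (lam - lm1) (lc m (piMap F t1.2.2))⁻¹ *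
            piMap F t1.2.2).coeff lam = 1 := by
          have h' := coeff_monomial_mul_lm (m := m) (a := lam - lm1)
            (c := (lc m (piMap F t1.2.2))⁻¹) (piMap F t1.2.2)
          rw [← hlm1, tsub_add_cancel_of_le hlam1] at h'
          rw [h', inv_mul_cancel₀ hlc1]
        have e2 : (MvPolynomial.monomial (lam - lm2) (lc m (piMap F t2.2.2))⁻¹ *
            piMap F t2.2.2).coeff lam = 1 := by
          have h' := coeff_monomial_mul_lm (m := m) (a := lam - lm2)
            (c := (lc m (piMap F t2.2.2))⁻¹) (piMap F t2.2.2)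
          rw [← hlm2, tsub_add_cancel_of_le hlam2] at h'
          rw [h', inv_mul_cancel₀ hlc2]
        rw [MvPolynomial.mem_support_iff, hπsp, MvPolynomial.coeff_sub, e1, e2] at hq
        exact hq (sub_self 1)
      exact lt_of_le_of_ne hle (fun hteq => hne (m.toSyn.injective hteq))
    set Dsp := (piMap F (spair m F t1.2.2 t2.2.2)).support.sup m.toSyn with hDsp
    obtain ⟨Lsp, hLspOk, hLspb, hLspsum, hLsp0⟩ := extract hsp Dsp (fun q hq => Finset.le_sup hq)
    have hLsplt : ∀ e ∈ Lsp, fE m F e < m.toSyn lam := by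
      by_cases hsp0 : piMap F (spair m F t1.2.2 t2.2.2) = 0
      · rw [hLsp0 hsp0]
        intro e he
        simp at he
      · intro e he
        obtain ⟨q0, hq0, hq0e⟩ := Finset.exists_mem_eq_sup _
          (MvPolynomial.support_nonempty.mpr hsp0) m.toSyn
        calc fE m F e ≤ Dsp := hLspb e he
        _ = m.toSyn q0 := by rw [hDsp, hq0e]
        _ < m.toSyn lam := hspb q0 hq0
    set cc : K := t1.2.1 * lc m (piMap F t1.2.2) with hcc
    have hccne : cc ≠ 0 := mul_ne_zero hOk1.2.2.1 hlc1
    set Nsh : Multiset (Ent σ K n) :=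
      Lsp.map (fun e => ((b + e.1, cc * e.2.1, e.2.2) : Ent σ K n)) with hNsh
    set cM : K := t2.2.1 + cc * (lc m (piMap F t2.2.2))⁻¹ with hcM
    set Nm : Multiset (Ent σ K n) := if cM = 0 then 0 else {(t2.1, cM, t2.2.2)} with hNm
    have hpsNm : psum F Nm = MvPolynomial.monomial t2.1 cM * piMap F t2.2.2 := by
      rw [hNm]
      split_ifs with h0
      · rw [h0]
        simp
      · show psum F ((t2.1, cM, t2.2.2) ::ₘ 0) = _
        rw [psum_cons, psum_zero, add_zero]
        rfl
    have hpsNsh : psum F Nsh = MvPolynomial.monomial b cc * piMap F (spair m F t1.2.2 t2.2.2) := by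
      rw [hNsh, psum_shift, hLspsum]
    have hkey : MvPolynomial.monomial b cc * piMap F (spair m F t1.2.2 t2.2.2)
        + MvPolynomial.monomial t2.1 cM * piMap F t2.2.2 = vE F t1 + vE F t2 := by
      rw [hπsp, mul_sub, ← mul_assoc, ← mul_assoc, MvPolynomial.monomial_mul,
        MvPolynomial.monomial_mul, ha1, ha2]
      have e1 : cc * (lc m (piMap F t1.2.2))⁻¹ = t1.2.1 := by
        rw [hcc]
        exact mul_inv_cancel_right₀ hlc1 _
      have e2 : MvPolynomial.monomial t2.1 cM = MvPolynomial.monomial t2.1 t2.2.1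
          + MvPolynomial.monomial t2.1 (cc * (lc m (piMap F t2.2.2))⁻¹) := by
        rw [hcM, map_add]
      rw [e1, e2, vE, vE]
      ring
    have hsum' : psum F (L₀ + (Nsh + Nm)) = piMap F γ := by
      rw [psum_add, psum_add, hpsNsh, hpsNm, ← hsum, hL, psum_cons, psum_cons, hkey]
      ring
    have honly : ∀ e ∈ L₀, fE m F e = (L.map (fE m F)).sup → sgE mo e < sS m mo F L := by
      intro e he hfe
      have heL : e ∈ L := by rw [hL]; exact Multiset.mem_cons_of_mem (Multiset.mem_cons_of_mem he)
      have heA : e ∈ AAs m F L := Multiset.mem_filter.mpr ⟨heL, by simpa using hfe⟩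
      rcases lt_or_eq_of_le (sgE_le_sS (mo := mo) heL hfe) with h | h
      · exact h
      exfalso
      rw [hsstar] at h
      have heA' : e ∈ t1 ::ₘ A₁ := by rw [← hA₁]; exact heA
      rcases Multiset.mem_cons.mp heA' with rfl | hmem
      · have hc1 : 1 ≤ Multiset.count e L₀ := Multiset.one_le_count_iff_mem.mpr he
        have hcount : 2 ≤ Multiset.count e L := by
          rw [hL, Multiset.count_cons_self]
          have h2 : Multiset.count e L₀ ≤ Multiset.count e (t2 ::ₘ L₀) := by
            rw [Multiset.count_cons]
            omega
          omega
        have hcA : Multiset.count e (AAs m F L) = Multiset.count e L := by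
          rw [AAs]
          exact Multiset.count_filter_of_pos (by simpa using hf1)
        have hcA1 : 1 ≤ Multiset.count e A₁ := by
          have := hA₁ ▸ hcA
          rw [Multiset.count_cons_self] at this
          omega
        exact hk2 e (Multiset.one_le_count_iff_mem.mp hcA1) rfl
      · exact hk2 e hmem h
    have hNew : ∀ e ∈ Nsh + Nm, fE m F e < (L.map (fE m F)).sup ∨
        (fE m F e = (L.map (fE m F)).sup ∧ sgE mo e < sS m mo F L) := by
      intro e he
      rcases Multiset.mem_add.mp he with he | he
      · left
        rw [hNsh] at he
        obtain ⟨e0, he0, rfl⟩ := Multiset.mem_map.mp he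
        rw [fE_shift]
        calc m.toSyn b + fE m F e0 < m.toSyn b + m.toSyn lam :=
          add_lt_add_of_le_of_lt le_rfl (hLsplt e0 he0)
        _ = M := by rw [← map_add, hblam, hMQ]
      · right
        rw [hNm] at he
        split_ifs at he with h0
        · simp at he
        · have he' : e = (t2.1, cM, t2.2.2) := by simpa using he
          subst he'
          constructor
          · show fE m F (t2.1, cM, t2.2.2) = M
            have hre : fE m F ((t2.1, cM, t2.2.2) : Ent σ K n) = fE m F t2 := rfl
            rw [hre, hf2]
          · show sgE mo (t2.1, cM, t2.2.2) < sS m mo F L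
            show sig mo (mulV t2.1 cM t2.2.2) < _
            rw [sig_mulV_eq h0 hP2mem hP2max, ← hsg2eq, hsstar]
            exact ht2lt
    obtain ⟨R, hRle, hRγ⟩ : ∃ R : (σ →₀ ℕ) × Fin n,
        sig mo (spair m F t1.2.2 t2.2.2) ≤ (mo.toSyn R : WithBot mo.syn) ∧
        (mo.toSyn (shf b R) : WithBot mo.syn) ≤ sig mo γ := by
      have hsub2 : sig mo (spair m F t1.2.2 t2.2.2)
          ≤ max (sig mo (mulV (lam - lm1) (lc m (piMap F t1.2.2))⁻¹ t1.2.2))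
              (sig mo (mulV (lam - lm2) (lc m (piMap F t2.2.2))⁻¹ t2.2.2)) := by
        have hd : spair m F t1.2.2 t2.2.2 = fun i =>
            mulV (lam - lm1) (lc m (piMap F t1.2.2))⁻¹ t1.2.2 i
            - mulV (lam - lm2) (lc m (piMap F t2.2.2))⁻¹ t2.2.2 i := rfl
        rw [hd]
        exact sig_sub_le
      rcases le_total (sig mo (mulV (lam - lm1) (lc m (piMap F t1.2.2))⁻¹ t1.2.2))
          (sig mo (mulV (lam - lm2) (lc m (piMap F t2.2.2))⁻¹ t2.2.2)) with hc | hc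
      · refine ⟨shf (lam - lm2) P2, ?_, ?_⟩
        · rw [← hhalf2]
          exact hsub2.trans (max_le hc le_rfl)
        · rw [hshift2, ← hsg2eq]
          exact hOk2.2.2.2
      · refine ⟨shf (lam - lm1) P1, ?_, ?_⟩
        · rw [← hhalf1]
          exact hsub2.trans (max_le le_rfl hc)
        · rw [hshift1, ← hsg1eq]
          exact hOk1.2.2.2
    have hOk' : Ok mo F B (sig mo γ) (L₀ + (Nsh + Nm)) := by
      intro e he
      rcases Multiset.mem_add.mp he with he | he
      · exact hOk e (by rw [hL]; exact Multiset.mem_cons_of_mem (Multiset.mem_cons_of_mem he))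
      rcases Multiset.mem_add.mp he with he | he
      · rw [hNsh] at he
        obtain ⟨e0, he0, rfl⟩ := Multiset.mem_map.mp he
        obtain ⟨h1, h2, h3, h4⟩ := hLspOk e0 he0
        refine ⟨h1, h2, mul_ne_zero hccne h3, ?_⟩
        show sig mo (mulV (b + e0.1) (cc * e0.2.1) e0.2.2) ≤ _
        rw [← mulV_mulV]
        exact (sig_mulV_le (h4.trans hRle)).trans hRγ
      · rw [hNm] at he
        split_ifs at he with h0
        · simp at he
        · have he' : e = (t2.1, cM, t2.2.2) := by simpa using he
          subst he'
          refine ⟨hOk2.1, hOk2.2.1, h0, ?_⟩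
          show sig mo (mulV t2.1 cM t2.2.2) ≤ _
          rw [sig_mulV_eq h0 hP2mem hP2max, ← hsg2eq]
          exact hOk2.2.2.2
    refine IH (meas m mo F (L₀ + (Nsh + Nm))) ?_ _ rfl hOk' hsum'
    refine dec1 hL ?_ honly hNew
    rw [hsstar]
    exact ht2lt

theorem sig_buchberger_criterion' (m : MonomialOrder σ) (mo : ModOrder σ n m)
    (F : Fin n → MvPolynomial σ K) (B : Set (Fin n → MvPolynomial σ K))
    (T : (σ →₀ ℕ) × Fin n)
    (hpairs : ∀ α ∈ B, ∀ β ∈ B, piMap F α ≠ 0 → piMap F β ≠ 0 →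
      sig mo (mulV (mlcm (lm m (piMap F α)) (lm m (piMap F β)) - lm m (piMap F α))
          (lc m (piMap F α))⁻¹ α) ≠
        sig mo (mulV (mlcm (lm m (piMap F α)) (lm m (piMap F β)) - lm m (piMap F β))
          (lc m (piMap F β))⁻¹ β) →
      max (sig mo (mulV (mlcm (lm m (piMap F α)) (lm m (piMap F β)) - lm m (piMap F α))
            (lc m (piMap F α))⁻¹ α))
          (sig mo (mulV (mlcm (lm m (piMap F α)) (lm m (piMap F β)) - lm m (piMap F β))
            (lc m (piMap F β))⁻¹ β)) < (mo.toSyn T : WithBot mo.syn) →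
      SRedToZero m mo F B (spair m F α β))
    (hbasis : ∀ i : Fin n, sig mo (eV i : Fin n → MvPolynomial σ K) < (mo.toSyn T : WithBot mo.syn) →
      SRedToZero m mo F B (eV i)) :
    SigGBUpTo m mo F B (mo.toSyn T : WithBot mo.syn) := by
  classical
  haveI : WellFoundedLT mo.syn := ⟨mo.wf⟩
  have hwf : WellFounded (Prod.Lex (· < · : WithBot mo.syn → WithBot mo.syn → Prop)
      (· < · : m.syn → m.syn → Prop)) :=
    wellFounded_lt.prod_lex wellFounded_lt
  suffices key : ∀ p : WithBot mo.syn × m.syn, ∀ γ : Fin n → MvPolynomial σ K,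
      (sig mo γ, m.toSyn (lm m (piMap F γ))) = p → sig mo γ < (mo.toSyn T : WithBot mo.syn) →
      SRedToZero m mo F B γ by
    intro γ hγ
    exact key _ γ rfl hγ
  intro p
  refine hwf.induction (C := fun p => ∀ γ : Fin n → MvPolynomial σ K,
      (sig mo γ, m.toSyn (lm m (piMap F γ))) = p →
      sig mo γ < (mo.toSyn T : WithBot mo.syn) → SRedToZero m mo F B γ) p ?_
  clear p
  intro p IH γ hp hT
  subst hp
  by_cases hπ : piMap F γ = 0
  · exact ⟨γ, Relation.ReflTransGen.refl, hπ⟩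
  have IH0 : ∀ δ, sig mo δ < sig mo γ → SRedToZero m mo F B δ := by
    intro δ h
    exact IH (sig mo δ, m.toSyn (lm m (piMap F δ))) (Prod.Lex.left _ _ h) δ rfl (h.trans hT)
  have hmne : ¬ msupport γ = ∅ := by
    intro h0
    exact hπ (by rw [msupport_eq_empty h0]; exact piMap_zero)
  obtain ⟨P, hPmem, hsigγ, hPmax⟩ := exists_sig (mo := mo) hmne
  set c0 : K := (γ P.2).coeff P.1 with hc0def
  have hc0 : c0 ≠ 0 := mem_msupport.mp hPmem
  set δ : Fin n → MvPolynomial σ K := fun i => γ i - mulV P.1 c0 (eV P.2) i with hδ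
  have heVsup : ∀ Q, Q ∈ msupport (eV (K := K) (n := n) P.2) → Q = ((0 : σ →₀ ℕ), P.2) := by
    intro Q hQ
    rw [mem_msupport] at hQ
    by_cases hq2 : Q.2 = P.2
    · simp only [eV, if_pos hq2] at hQ
      have h1 : Q.1 = 0 := by
        by_contra h0
        rw [MvPolynomial.coeff_one, if_neg (fun h => h0 h.symm)] at hQ
        exact hQ rfl
      exact Prod.ext h1 hq2
    · simp only [eV, if_neg hq2] at hQ
      simp at hQ
  have hmem0 : ((0 : σ →₀ ℕ), P.2) ∈ msupport (eV (K := K) (n := n) P.2) := by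
    rw [mem_msupport]
    show (if P.2 = P.2 then (1 : MvPolynomial σ K) else 0).coeff 0 ≠ 0
    rw [if_pos rfl, MvPolynomial.coeff_zero_one]
    exact one_ne_zero
  have hsigeV : sig mo (eV (K := K) (n := n) P.2) = (mo.toSyn ((0 : σ →₀ ℕ), P.2) : WithBot mo.syn) := by
    refine le_antisymm (sig_le_iff.mpr ?_) (le_sig hmem0)
    intro Q hQ
    rw [heVsup Q hQ]
  have hshfP : shf P.1 ((0 : σ →₀ ℕ), P.2) = P := by
    simp [shf]
  have heVT : sig mo (eV (K := K) (n := n) P.2) < (mo.toSyn T : WithBot mo.syn) := by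
    rw [hsigeV]
    refine lt_of_le_of_lt ?_ hT
    rw [hsigγ]
    apply WithBot.coe_le_coe.mpr
    have h2 : mo.toSyn ((0 : σ →₀ ℕ), P.2) ≤ mo.toSyn (P.1, P.2) :=
      (mo.compat 0 P.1 P.2).mpr (m.toSyn_monotone zero_le)
    simpa using h2
  have hδlt : sig mo δ < sig mo γ := by
    rw [hsigγ]
    apply sig_lt_coe_of
    intro Q hQ
    have hle : mo.toSyn Q ≤ mo.toSyn P := by
      rcases msupport_sub hQ with h | h
      · exact hPmax Q h
      · obtain ⟨Q', hQ', rfl⟩ := (mem_msupport_mulV hc0).mp h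
        rw [heVsup Q' hQ', hshfP]
    have hne : Q ≠ P := by
      intro h0
      subst h0
      rw [mem_msupport] at hQ
      apply hQ
      show (γ Q.2).coeff Q.1 - (mulV Q.1 c0 (eV Q.2) Q.2).coeff Q.1 = 0
      have h3 : (mulV Q.1 c0 (eV Q.2) Q.2).coeff Q.1 = c0 := by
        show (MvPolynomial.monomial Q.1 c0 *
          (if Q.2 = Q.2 then (1 : MvPolynomial σ K) else 0)).coeff Q.1 = c0
        rw [if_pos rfl, mul_one]
        simp [MvPolynomial.coeff_monomial]
      rw [h3, hc0def]
      exact sub_self _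
    exact lt_of_le_of_ne hle fun ht => hne (mo.toSyn.injective ht)
  have hδred : SRedToZero m mo F B δ := IH0 δ hδlt
  have heVred : SRedToZero m mo F B (eV P.2) := hbasis P.2 heVT
  have hπδ : piMap F δ = piMap F γ - MvPolynomial.monomial P.1 c0 * F P.2 := by
    rw [hδ, piMap_sub, piMap_mulV, piMap_eV]
  obtain ⟨L1, hL1Ok, -, hL1sum, -⟩ := extract hδred ((piMap F δ).support.sup m.toSyn)
    (fun q hq => Finset.le_sup hq)
  obtain ⟨L2, hL2Ok, -, hL2sum, -⟩ := extract heVred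
    ((piMap F (eV (K := K) (n := n) P.2)).support.sup m.toSyn) (fun q hq => Finset.le_sup hq)
  set L2' : Multiset (Ent σ K n) :=
    L2.map (fun e => ((P.1 + e.1, c0 * e.2.1, e.2.2) : Ent σ K n)) with hL2'
  have hL2'sum : psum F L2' = MvPolynomial.monomial P.1 c0 * piMap F (eV (K := K) (n := n) P.2) := by
    rw [hL2', psum_shift, hL2sum]
  have hOkall : Ok mo F B (sig mo γ) (L1 + L2') := by
    intro e he
    rcases Multiset.mem_add.mp he with he | he
    · exact (hL1Ok.mono hδlt.le) e he
    · rw [hL2'] at he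
      obtain ⟨e0, he0, rfl⟩ := Multiset.mem_map.mp he
      obtain ⟨h1, h2, h3, h4⟩ := hL2Ok e0 he0
      refine ⟨h1, h2, mul_ne_zero hc0 h3, ?_⟩
      show sig mo (mulV (P.1 + e0.1) (c0 * e0.2.1) e0.2.2) ≤ _
      rw [← mulV_mulV]
      have h5 : sig mo (mulV e0.1 e0.2.1 e0.2.2) ≤ (mo.toSyn ((0 : σ →₀ ℕ), P.2) : WithBot mo.syn) := by
        rw [← hsigeV]
        exact h4
      refine le_trans (sig_mulV_le h5) ?_
      rw [hsigγ, hshfP]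
  have hsumall : psum F (L1 + L2') = piMap F γ := by
    rw [psum_add, hL1sum, hL2'sum, hπδ, piMap_eV]
    ring
  have htop : TopRed m mo F B γ := topRed_of_rep hpairs hπ hT IH0 (L1 + L2') hOkall hsumall
  obtain ⟨γ', hstep, hsig', hdec⟩ := step_of_topRed htop hπ
  rcases hdec with h0 | hlt
  · exact ⟨γ', Relation.ReflTransGen.single hstep, h0⟩
  · have hred' : SRedToZero m mo F B γ' := by
      rcases lt_or_eq_of_le hsig' with hs | hs
      · exact IH (sig mo γ', m.toSyn (lm m (piMap F γ'))) (Prod.Lex.left _ _ hs) γ' rfl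
          (lt_of_le_of_lt hsig' hT)
      · refine IH (sig mo γ', m.toSyn (lm m (piMap F γ'))) ?_ γ' rfl (lt_of_le_of_lt hsig' hT)
        rw [hs]
        exact Prod.Lex.right _ hlt
    obtain ⟨w, hw1, hw2⟩ := hred'
    exact ⟨w, Relation.ReflTransGen.head hstep hw1, hw2⟩
end Lemmas3

/-- **Signature Buchberger criterion.** Let `T` be a module monomial and `B` finite. If every
regular S-pair of elements of `B` with signature `< T` 𝔰-reduces to zero w.r.t. `B`, and every
basis vector `eᵢ` with `eᵢ < T` 𝔰-reduces to zero w.r.t. `B`, then `B` is a signature Gröbner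
basis up to signature `T`. (An S-pair is regular when its two summands have different
signatures, and then its signature is their maximum.) -/
theorem sig_buchberger_criterion (m : MonomialOrder σ) (mo : ModOrder σ n m)
    (F : Fin n → MvPolynomial σ K) (B : Set (Fin n → MvPolynomial σ K)) (hBfin : B.Finite)
    (T : (σ →₀ ℕ) × Fin n)
    (hpairs : ∀ α ∈ B, ∀ β ∈ B, piMap F α ≠ 0 → piMap F β ≠ 0 →
      -- the S-pair is regular:
      sig mo (mulV (mlcm (lm m (piMap F α)) (lm m (piMap F β)) - lm m (piMap F α))
          (lc m (piMap F α))⁻¹ α) ≠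
        sig mo (mulV (mlcm (lm m (piMap F α)) (lm m (piMap F β)) - lm m (piMap F β))
          (lc m (piMap F β))⁻¹ β) →
      -- its signature is below T:
      max (sig mo (mulV (mlcm (lm m (piMap F α)) (lm m (piMap F β)) - lm m (piMap F α))
            (lc m (piMap F α))⁻¹ α))
          (sig mo (mulV (mlcm (lm m (piMap F α)) (lm m (piMap F β)) - lm m (piMap F β))
            (lc m (piMap F β))⁻¹ β)) < (mo.toSyn T : WithBot mo.syn) →
      SRedToZero m mo F B (spair m F α β))
    (hbasis : ∀ i : Fin n, sig mo (eV i : Fin n → MvPolynomial σ K) < (mo.toSyn T : WithBot mo.syn) →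
      SRedToZero m mo F B (eV i)) :
    SigGBUpTo m mo F B (mo.toSyn T : WithBot mo.syn) := by
  exact sig_buchberger_criterion' m mo F B T hpairs hbasis

end GB
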